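/- For α, β ∈ Γ and nonzero u, v, u+v, the theta-type functions k_α satisfy the three-term Fay-type identity: (k_α(-v,z) - 1/v)(k_β(u+v,z') + 1/(u+v)) - (k_α(u,z) + 1/u)(k_{β-α}(u+v,z'-z) + 1/(u+v)) + (k_β(u,z') + 1/u)(k_{β-α}(v,z'-z) + 1/v) = 0, as meromorphic functions of (u,v,z,z'). -/

import Mathlib

open Complex Set Filter Metric Topology Bornology

/-- the three-term Fay-type identity for the twisted theta kernels
`k_α(x,z) = e^{-2πiax} θ(z-α̃+x)/(θ(z-α̃)θ(x)) - 1/x` (lift `α̃ = p/M + (q/N)τ`):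
`(k_α(-v,z) - 1/v)(k_β(u+v,z') + 1/(u+v))
  - (k_α(u,z) + 1/u)(k_{β-α}(u+v,z'-z) + 1/(u+v))
  + (k_β(u,z') + 1/u)(k_{β-α}(v,z'-z) + 1/v) = 0`. -/
noncomputable def phi (τ z : ℂ) : ℂ :=
  -Complex.exp (-(↑Real.pi * I * τ)) * Complex.exp (-(2 * ↑Real.pi * I * z))

noncomputable def Gf (θ : ℂ → ℂ) (u v B : ℂ) : ℂ → ℂ := fun A =>
  θ (A + u) * θ (B - A + u + v) * θ B * θ v + θ (A - v) * θ (B + u + v) * θ (B - A) * θ u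
    - θ (B + u) * θ (B - A + v) * θ A * θ (u + v)

noncomputable def Df (θ : ℂ → ℂ) (c : ℂ) : ℂ → ℂ := fun A => θ A * θ (A - c)

noncomputable def Psi (τ B v A : ℂ) : ℂ := Complex.exp (2 * ↑Real.pi * I * (B + v - τ - 2 * A))

lemma Psi_ne (τ B v A : ℂ) : Psi τ B v A ≠ 0 := Complex.exp_ne_zero _

open scoped Classical in
noncomputable def Tf (G D : ℂ → ℂ) : ℂ → ℂ := fun A =>
  if D A = 0 then deriv G A / deriv D A else G A / D A

lemma Tf_of_ne {G D : ℂ → ℂ} {A : ℂ} (h : D A ≠ 0) : Tf G D A = G A / D A := if_neg h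

section Aux

variable (τ : ℂ) (θ : ℂ → ℂ)

lemma theta_zero (hzero : ∀ z : ℂ, θ z = 0 ↔ ∃ m n : ℤ, z = (m : ℂ) + (n : ℂ) * τ) :
    θ 0 = 0 := (hzero 0).mpr ⟨0, 0, by simp⟩

lemma theta_sub_one (h1 : ∀ z : ℂ, θ (z + 1) = -θ z) (z : ℂ) : θ (z - 1) = -θ z := by
  have := h1 (z - 1)
  rw [sub_add_cancel] at this
  rw [this]; ring

lemma phi_ne (z : ℂ) : phi τ z ≠ 0 := by
  simp [phi, Complex.exp_ne_zero]

lemma theta_sub_tau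
    (hτper : ∀ z : ℂ, θ (z + τ) = phi τ z * θ z) (z : ℂ) :
    θ (z - τ) = (phi τ (z - τ))⁻¹ * θ z := by
  have := hτper (z - τ)
  rw [sub_add_cancel] at this
  rw [this]
  field_simp [phi_ne]

lemma deriv_shift_one (hol : Differentiable ℂ θ) (h1 : ∀ z : ℂ, θ (z + 1) = -θ z) (z : ℂ) :
    deriv θ (z + 1) = -deriv θ z := by
  have hfun : (fun w : ℂ => θ (w + 1)) = fun w => -θ w := funext h1
  calc deriv θ (z + 1) = deriv (fun w => θ (w + 1)) z := (deriv_comp_add_const θ 1 z).symm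
  _ = deriv (fun w => -θ w) z := by rw [hfun]
  _ = -deriv θ z := deriv.neg

lemma phi_diff : Differentiable ℂ (phi τ) := by
  unfold phi
  apply Differentiable.const_mul
  apply Complex.differentiable_exp.comp
  fun_prop

lemma deriv_shift_tau (hol : Differentiable ℂ θ)
    (hτper : ∀ z : ℂ, θ (z + τ) = phi τ z * θ z) (z : ℂ) (hz : θ z = 0) :
    deriv θ (z + τ) = phi τ z * deriv θ z := by
  have hfun : (fun w : ℂ => θ (w + τ)) = fun w => phi τ w * θ w := funext hτper
  have : deriv θ (z + τ) = deriv (fun w => phi τ w * θ w) z := by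
    rw [← hfun, deriv_comp_add_const]
  rw [this, deriv_fun_mul (phi_diff τ z) (hol z), hz, mul_zero, zero_add]

lemma deriv_lat_ne (hol : Differentiable ℂ θ)
    (hzero : ∀ z : ℂ, θ z = 0 ↔ ∃ m n : ℤ, z = (m : ℂ) + (n : ℂ) * τ)
    (h1 : ∀ z : ℂ, θ (z + 1) = -θ z)
    (hτper : ∀ z : ℂ, θ (z + τ) = phi τ z * θ z)
    (hder : deriv θ 0 = 1) :
    ∀ m n : ℤ, deriv θ ((m : ℂ) + (n : ℂ) * τ) ≠ 0 := by
  have hlat : ∀ m n : ℤ, θ ((m : ℂ) + (n : ℂ) * τ) = 0 := fun m n => (hzero _).mpr ⟨m, n, rfl⟩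
  have hn : ∀ n : ℤ, deriv θ ((n : ℂ) * τ) ≠ 0 := by
    intro n
    induction n using Int.induction_on with
    | zero => simpa using hder ▸ one_ne_zero
    | succ k ih =>
        have hz : θ ((k : ℂ) * τ) = 0 := by simpa using hlat 0 k
        have := deriv_shift_tau τ θ hol hτper ((k : ℂ) * τ) hz
        rw [show ((k : ℂ) * τ + τ) = ((k : ℤ) + 1 : ℤ) * τ by push_cast; ring] at this
        rw [this]
        exact mul_ne_zero (phi_ne τ _) ih
    | pred k ih =>
        have hz : θ (((-k : ℤ) - 1 : ℤ) * τ) = 0 := by simpa using hlat 0 (-k - 1)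
        have := deriv_shift_tau τ θ hol hτper (((-k : ℤ) - 1 : ℤ) * τ) hz
        rw [show ((((-k : ℤ) - 1 : ℤ) : ℂ) * τ + τ) = ((-k : ℤ) : ℂ) * τ by push_cast; ring] at this
        intro h
        rw [h, mul_zero] at this
        exact ih this
  intro m n
  induction m using Int.induction_on with
  | zero => simpa using hn n
  | succ k ih =>
      have := deriv_shift_one θ hol h1 ((k : ℂ) + (n : ℂ) * τ)
      rw [show ((k : ℂ) + (n : ℂ) * τ + 1) = (((k : ℤ) + 1 : ℤ) : ℂ) + (n : ℂ) * τ by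
        push_cast; ring] at this
      rw [this]
      exact neg_ne_zero.mpr ih
  | pred k ih =>
      have := deriv_shift_one θ hol h1 ((((-k : ℤ) - 1 : ℤ) : ℂ) + (n : ℂ) * τ)
      rw [show ((((-k : ℤ) - 1 : ℤ) : ℂ) + (n : ℂ) * τ + 1) = ((-k : ℤ) : ℂ) + (n : ℂ) * τ by
        push_cast; ring] at this
      intro h
      rw [h, neg_zero] at this
      exact ih this

lemma pair_step (hτper : ∀ z : ℂ, θ (z + τ) = phi τ z * θ z) (B v x y A : ℂ)
    (hxy : y - x = B + v) :
    θ (A + τ + x) * θ (y - (A + τ)) = Psi τ B v A * (θ (A + x) * θ (y - A)) := by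
  have hy : y = x + (B + v) := by linear_combination hxy
  subst hy
  have e1 : θ (A + τ + x) = phi τ (A + x) * θ (A + x) := by
    rw [show A + τ + x = (A + x) + τ by ring, hτper]
  have e2 : θ (x + (B + v) - (A + τ)) = (phi τ (x + (B + v) - A - τ))⁻¹ * θ (x + (B + v) - A) := by
    rw [show x + (B + v) - (A + τ) = (x + (B + v) - A) - τ by ring, theta_sub_tau τ θ hτper]
  rw [e1, e2]
  have hphi : phi τ (A + x) = Psi τ B v A * phi τ (x + (B + v) - A - τ) := by
    simp only [phi, Psi, neg_mul, mul_neg, ← Complex.exp_add]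
    congr 1
    ring
  rw [hphi]
  field_simp [phi_ne]

lemma D_perτ (hτper : ∀ z : ℂ, θ (z + τ) = phi τ z * θ z) (B v A : ℂ) :
    Df θ (B + v) (A + τ) = Psi τ B v A * Df θ (B + v) A := by
  simp only [Df]
  rw [hτper A, show A + τ - (B + v) = (A - (B + v)) + τ by ring, hτper]
  have hphi : phi τ A * phi τ (A - (B + v)) = Psi τ B v A := by
    simp only [phi, Psi, neg_mul, mul_neg, neg_neg, ← Complex.exp_add]
    congr 1
    ring
  calc phi τ A * θ A * (phi τ (A - (B + v)) * θ (A - (B + v)))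
      = (phi τ A * phi τ (A - (B + v))) * (θ A * θ (A - (B + v))) := by ring
  _ = Psi τ B v A * (θ A * θ (A - (B + v))) := by rw [hphi]

lemma D_per1 (h1 : ∀ z : ℂ, θ (z + 1) = -θ z) (c A : ℂ) :
    Df θ c (A + 1) = Df θ c A := by
  simp only [Df]
  rw [h1 A, show A + 1 - c = (A - c) + 1 by ring, h1]
  ring

lemma G_per1 (h1 : ∀ z : ℂ, θ (z + 1) = -θ z) (u v B A : ℂ) :
    Gf θ u v B (A + 1) = Gf θ u v B A := by
  simp only [Gf]
  rw [show A + 1 + u = (A + u) + 1 by ring, h1,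
    show B - (A + 1) + u + v = (B - A + u + v) - 1 by ring, theta_sub_one θ h1,
    show A + 1 - v = (A - v) + 1 by ring, h1,
    show B - (A + 1) + v = (B - A + v) - 1 by ring, theta_sub_one θ h1,
    show B - (A + 1) = (B - A) - 1 by ring, theta_sub_one θ h1,
    h1 A]
  ring

lemma G_perτ (hτper : ∀ z : ℂ, θ (z + τ) = phi τ z * θ z) (u v B A : ℂ) :
    Gf θ u v B (A + τ) = Psi τ B v A * Gf θ u v B A := by
  have e1 : θ (A + τ + u) * θ (B - (A + τ) + u + v)
      = Psi τ B v A * (θ (A + u) * θ (B - A + u + v)) := by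
    have h := pair_step τ θ hτper B v u (B + u + v) A (by ring)
    rw [show B + u + v - (A + τ) = B - (A + τ) + u + v by ring,
      show B + u + v - A = B - A + u + v by ring] at h
    exact h
  have e2 : θ (A + τ - v) * θ (B - (A + τ))
      = Psi τ B v A * (θ (A - v) * θ (B - A)) := by
    have h := pair_step τ θ hτper B v (-v) B A (by ring)
    rw [show A + τ + -v = A + τ - v by ring, show A + -v = A - v by ring] at h
    exact h
  have e3 : θ (A + τ) * θ (B - (A + τ) + v)
      = Psi τ B v A * (θ A * θ (B - A + v)) := by
    have h := pair_step τ θ hτper B v 0 (B + v) A (by ring)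
    rw [show A + τ + 0 = A + τ by ring, show A + (0:ℂ) = A by ring,
      show B + v - (A + τ) = B - (A + τ) + v by ring,
      show B + v - A = B - A + v by ring] at h
    exact h
  simp only [Gf]
  linear_combination θ B * θ v * e1 + θ (B + u + v) * θ u * e2 - θ (B + u) * θ (u + v) * e3

lemma G_zero_zero (hzero : ∀ z : ℂ, θ z = 0 ↔ ∃ m n : ℤ, z = (m : ℂ) + (n : ℂ) * τ)
    (hodd : ∀ z : ℂ, θ (-z) = -θ z) (u v B : ℂ) :
    Gf θ u v B 0 = 0 := by
  have h0 : θ 0 = 0 := theta_zero τ θ hzero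
  simp only [Gf]
  rw [show (0:ℂ) + u = u by ring, show B - 0 + u + v = B + u + v by ring,
    show (0:ℂ) - v = -v by ring, show B - 0 + v = B + v by ring,
    show B - (0:ℂ) = B by ring, hodd v, h0]
  ring

lemma G_neg_u (hzero : ∀ z : ℂ, θ z = 0 ↔ ∃ m n : ℤ, z = (m : ℂ) + (n : ℂ) * τ)
    (hodd : ∀ z : ℂ, θ (-z) = -θ z) (u v B : ℂ) :
    Gf θ u v B (-u) = 0 := by
  have h0 : θ 0 = 0 := theta_zero τ θ hzero
  simp only [Gf]
  rw [show -u + u = (0:ℂ) by ring, show -u - v = -(u + v) by ring,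
    show B - -u + v = B + u + v by ring, show B - -u = B + u by ring,
    hodd (u + v), hodd u, h0]
  ring

lemma G_B_add_v (hzero : ∀ z : ℂ, θ z = 0 ↔ ∃ m n : ℤ, z = (m : ℂ) + (n : ℂ) * τ)
    (hodd : ∀ z : ℂ, θ (-z) = -θ z) (u v B : ℂ) :
    Gf θ u v B (B + v) = 0 := by
  have h0 : θ 0 = 0 := theta_zero τ θ hzero
  simp only [Gf]
  rw [show B - (B + v) + u + v = u by ring, show B - (B + v) + v = (0:ℂ) by ring,
    show B - (B + v) = -v by ring, show B + v + u = B + u + v by ring,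
    show B + v - v = B by ring, hodd v, h0]
  ring

lemma G_translate (h1 : ∀ z : ℂ, θ (z + 1) = -θ z)
    (hτper : ∀ z : ℂ, θ (z + τ) = phi τ z * θ z)
    (u v B A : ℂ) (hA : Gf θ u v B A = 0) (m n : ℤ) :
    Gf θ u v B (A + (m : ℂ) + (n : ℂ) * τ) = 0 := by
  have step1 : ∀ w : ℂ, Gf θ u v B w = 0 → Gf θ u v B (w + 1) = 0 := fun w hw => by
    rw [G_per1 θ h1 u v B w]; exact hw
  have step1' : ∀ w : ℂ, Gf θ u v B w = 0 → Gf θ u v B (w - 1) = 0 := fun w hw => by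
    have := G_per1 θ h1 u v B (w - 1)
    rw [sub_add_cancel, hw] at this
    exact this.symm
  have stepτ : ∀ w : ℂ, Gf θ u v B w = 0 → Gf θ u v B (w + τ) = 0 := fun w hw => by
    rw [G_perτ τ θ hτper u v B w, hw, mul_zero]
  have stepτ' : ∀ w : ℂ, Gf θ u v B w = 0 → Gf θ u v B (w - τ) = 0 := fun w hw => by
    have := G_perτ τ θ hτper u v B (w - τ)
    rw [sub_add_cancel, hw] at this
    exact (mul_eq_zero.mp this.symm).resolve_left (Psi_ne τ B v (w - τ))
  have hm : ∀ (k : ℤ) (w : ℂ), Gf θ u v B w = 0 → Gf θ u v B (w + (k : ℂ)) = 0 := by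
    intro k
    induction k using Int.induction_on with
    | zero => intro w hw; simpa using hw
    | succ k ih =>
        intro w hw
        have h2 := step1 _ (ih w hw)
        have harg : w + (((k : ℤ) + 1 : ℤ) : ℂ) = w + (((k : ℤ) : ℤ) : ℂ) + 1 := by
          push_cast; ring
        rw [harg]; exact h2
    | pred k ih =>
        intro w hw
        have h2 := step1' _ (ih w hw)
        have harg : w + ((-(k : ℤ) - 1 : ℤ) : ℂ) = w + ((-(k : ℤ) : ℤ) : ℂ) - 1 := by
          push_cast; ring
        rw [harg]; exact h2
  have hnτ : ∀ (k : ℤ) (w : ℂ), Gf θ u v B w = 0 → Gf θ u v B (w + (k : ℂ) * τ) = 0 := by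
    intro k
    induction k using Int.induction_on with
    | zero => intro w hw; simpa using hw
    | succ k ih =>
        intro w hw
        have h2 := stepτ _ (ih w hw)
        have harg : w + (((k : ℤ) + 1 : ℤ) : ℂ) * τ = w + (((k : ℤ) : ℤ) : ℂ) * τ + τ := by
          push_cast; ring
        rw [harg]; exact h2
    | pred k ih =>
        intro w hw
        have h2 := stepτ' _ (ih w hw)
        have harg : w + ((-(k : ℤ) - 1 : ℤ) : ℂ) * τ = w + ((-(k : ℤ) : ℤ) : ℂ) * τ - τ := by
          push_cast; ring
        rw [harg]; exact h2
  exact hnτ n (A + m) (hm m A hA)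

lemma G_diff (hol : Differentiable ℂ θ) (u v B : ℂ) :
    Differentiable ℂ (Gf θ u v B) := by
  have dθ : ∀ g : ℂ → ℂ, Differentiable ℂ g → Differentiable ℂ (fun w => θ (g w)) :=
    fun g hg => hol.comp hg
  unfold Gf
  apply Differentiable.sub
  · apply Differentiable.add
    · exact (((dθ _ (by fun_prop)).mul (dθ _ (by fun_prop))).mul_const _).mul_const _
    · exact (((dθ _ (by fun_prop)).mul_const _).mul (dθ _ (by fun_prop))).mul_const _
  · exact (((differentiable_const _).mul (dθ _ (by fun_prop))).mul (dθ _ (by fun_prop))).mul_const _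

lemma D_diff (hol : Differentiable ℂ θ) (c : ℂ) : Differentiable ℂ (Df θ c) := by
  unfold Df
  exact hol.mul (hol.comp (differentiable_id.sub_const c))

lemma D_deriv (hol : Differentiable ℂ θ) (c p : ℂ) :
    deriv (Df θ c) p = deriv θ p * θ (p - c) + θ p * deriv θ (p - c) := by
  unfold Df
  have hg : DifferentiableAt ℂ (fun w : ℂ => θ (w - c)) p :=
    (hol (p - c)).comp p (differentiableAt_id.sub_const c)
  rw [deriv_fun_mul (hol p) hg]
  congr 2
  exact deriv_comp_sub_const θ c p

end Aux

lemma Tf_differentiable {G D : ℂ → ℂ} (hG : Differentiable ℂ G) (hD : Differentiable ℂ D)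
    (hGD : ∀ p, D p = 0 → G p = 0 ∧ deriv D p ≠ 0) (w₀ : ℂ) (hw₀ : D w₀ ≠ 0) :
    Differentiable ℂ (Tf G D) := by
  intro p
  by_cases hp : D p = 0
  · obtain ⟨hGp, hD'p⟩ := hGD p hp
    have hdsG : Differentiable ℂ (dslope G p) := by
      rw [← differentiableOn_univ]
      exact (Complex.differentiableOn_dslope (univ_mem)).mpr hG.differentiableOn
    have hdsD : Differentiable ℂ (dslope D p) := by
      rw [← differentiableOn_univ]
      exact (Complex.differentiableOn_dslope (univ_mem)).mpr hD.differentiableOn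
    have hdsDp : dslope D p p ≠ 0 := by rw [dslope_same]; exact hD'p
    have hiso : ∀ᶠ w in 𝓝[≠] p, D w ≠ 0 := by
      rcases (hD.analyticAt p).eventually_eq_zero_or_eventually_ne_zero with hc | hc
      · exfalso
        have hall := AnalyticOnNhd.eqOn_zero_of_preconnected_of_eventuallyEq_zero
          (fun w _ => hD.analyticAt w) isPreconnected_univ (mem_univ p) hc
        exact hw₀ (hall (mem_univ w₀))
      · exact hc
    have hdsne : ∀ᶠ w in 𝓝 p, dslope D p w ≠ 0 :=
      (hdsD.continuous.continuousAt).eventually_ne hdsDp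
    have hQ : DifferentiableAt ℂ (fun w => dslope G p w / dslope D p w) p :=
      (hdsG p).div (hdsD p) hdsDp
    apply hQ.congr_of_eventuallyEq
    have hiso' : ∀ᶠ w in 𝓝 p, w ≠ p → D w ≠ 0 := eventually_nhdsWithin_iff.mp hiso
    filter_upwards [hiso', hdsne] with w hw1 hw2
    by_cases hwp : w = p
    · subst hwp
      simp only [Tf, if_pos hp, dslope_same]
    · have hDw : D w ≠ 0 := hw1 hwp
      rw [Tf_of_ne hDw, dslope_of_ne G hwp, dslope_of_ne D hwp, slope_def_field,
        slope_def_field, hGp, hp, sub_zero, sub_zero,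
        div_div_div_cancel_right₀ (sub_ne_zero.mpr hwp)]
  · have hopen : {w : ℂ | D w ≠ 0} ∈ 𝓝 p :=
      (isOpen_compl_iff.mpr (isClosed_eq hD.continuous continuous_const)).mem_nhds hp
    have : DifferentiableAt ℂ (fun w => G w / D w) p := (hG p).div (hD p) hp
    apply this.congr_of_eventuallyEq
    filter_upwards [hopen] with w hw
    exact Tf_of_ne hw

lemma elliptic_const {f : ℂ → ℂ} {τ : ℂ} (hτ : τ.im ≠ 0) (hf : Differentiable ℂ f)
    (hp1 : ∀ A : ℂ, f (A + 1) = f A) (hpτ : ∀ A : ℂ, f (A + τ) = f A) (a b : ℂ) : f a = f b := by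
  have hp1' : ∀ A : ℂ, f (A - 1) = f A := fun A => by
    have := hp1 (A - 1); rw [sub_add_cancel] at this; exact this.symm
  have hpτ' : ∀ A : ℂ, f (A - τ) = f A := fun A => by
    have := hpτ (A - τ); rw [sub_add_cancel] at this; exact this.symm
  have hm : ∀ (k : ℤ) (A : ℂ), f (A + (k : ℂ)) = f A := by
    intro k
    induction k using Int.induction_on with
    | zero => intro A; simp
    | succ k ih =>
        intro A
        have harg : A + (((k : ℤ) + 1 : ℤ) : ℂ) = (A + ((k : ℤ) : ℂ)) + 1 := by push_cast; ring
        rw [harg, hp1, ih]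
    | pred k ih =>
        intro A
        have harg : A + ((-(k : ℤ) - 1 : ℤ) : ℂ) = (A + ((-(k : ℤ) : ℤ) : ℂ)) - 1 := by
          push_cast; ring
        rw [harg, hp1', ih]
  have hper : ∀ (m n : ℤ) (A : ℂ), f (A + (m : ℂ) + (n : ℂ) * τ) = f A := by
    have hnτ : ∀ (k : ℤ) (A : ℂ), f (A + (k : ℂ) * τ) = f A := by
      intro k
      induction k using Int.induction_on with
      | zero => intro A; simp
      | succ k ih =>
          intro A
          have harg : A + (((k : ℤ) + 1 : ℤ) : ℂ) * τ = (A + ((k : ℤ) : ℂ) * τ) + τ := by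
            push_cast; ring
          rw [harg, hpτ, ih]
      | pred k ih =>
          intro A
          have harg : A + ((-(k : ℤ) - 1 : ℤ) : ℂ) * τ = (A + ((-(k : ℤ) : ℤ) : ℂ) * τ) - τ := by
            push_cast; ring
          rw [harg, hpτ', ih]
    intro m n A
    rw [hnτ n (A + m), hm m A]
  set K : Set ℂ := (fun p : ℝ × ℝ => (p.1 : ℂ) + (p.2 : ℂ) * τ) '' (Icc (0:ℝ) 1 ×ˢ Icc (0:ℝ) 1)
    with hK
  have hKc : IsCompact K := (isCompact_Icc.prod isCompact_Icc).image (by continuity)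
  have hrange : range f ⊆ f '' K := by
    rintro w ⟨A, rfl⟩
    set t : ℝ := A.im / τ.im with ht
    set s : ℝ := A.re - t * τ.re with hs
    have hA : A = (s : ℂ) + (t : ℂ) * τ := by
      apply Complex.ext
      · simp [hs]
      · simp [ht]; field_simp
    refine ⟨(↑(Int.fract s) : ℂ) + (↑(Int.fract t) : ℂ) * τ,
      ⟨⟨Int.fract s, Int.fract t⟩,
        ⟨⟨Int.fract_nonneg s, (Int.fract_lt_one s).le⟩,
         ⟨Int.fract_nonneg t, (Int.fract_lt_one t).le⟩⟩, rfl⟩, ?_⟩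
    have hfr : ∀ x : ℝ, (Int.fract x : ℝ) = x - (⌊x⌋ : ℝ) := fun x => rfl
    have := hper ⌊s⌋ ⌊t⌋ ((↑(Int.fract s) : ℂ) + (↑(Int.fract t) : ℂ) * τ)
    have harg : (↑(Int.fract s) : ℂ) + (↑(Int.fract t) : ℂ) * τ + (⌊s⌋ : ℂ) + (⌊t⌋ : ℂ) * τ
        = A := by
      rw [hA]
      push_cast [hfr]
      ring
    rw [harg] at this
    exact this.symm
  have hb : IsBounded (range f) := ((hKc.image hf.continuous).isBounded).subset hrange
  exact hf.apply_eq_apply_of_bounded hb a b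

lemma core_generic (τ : ℂ) (hτ : 0 < τ.im) (θ : ℂ → ℂ) (hol : Differentiable ℂ θ)
    (hzero : ∀ z : ℂ, θ z = 0 ↔ ∃ m n : ℤ, z = (m : ℂ) + (n : ℂ) * τ)
    (h1 : ∀ z : ℂ, θ (z + 1) = -θ z)
    (hodd : ∀ z : ℂ, θ (-z) = -θ z)
    (hτper : ∀ z : ℂ, θ (z + τ) = phi τ z * θ z)
    (hder : deriv θ 0 = 1)
    (u v B : ℂ) (hθu : θ u ≠ 0) (hBv : θ (B + v) ≠ 0) (hBuv : θ (B + u + v) ≠ 0)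
    (A : ℂ) : Gf θ u v B A = 0 := by
  have hGd : Differentiable ℂ (Gf θ u v B) := G_diff θ hol u v B
  have hDd : Differentiable ℂ (Df θ (B + v)) := D_diff θ hol (B + v)
  have hGD : ∀ p, Df θ (B + v) p = 0 → Gf θ u v B p = 0 ∧ deriv (Df θ (B + v)) p ≠ 0 := by
    intro p hp
    have hp' : θ p * θ (p - (B + v)) = 0 := hp
    rcases mul_eq_zero.mp hp' with h | h
    · obtain ⟨m, n, hpe⟩ := (hzero p).mp h
      have hGp : Gf θ u v B p = 0 := by
        have h2 := G_translate τ θ h1 hτper u v B 0 (G_zero_zero τ θ hzero hodd u v B) m n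
        rw [hpe, show (m : ℂ) + (n : ℂ) * τ = 0 + (m : ℂ) + (n : ℂ) * τ by ring]
        exact h2
      refine ⟨hGp, ?_⟩
      rw [D_deriv θ hol, h, zero_mul, add_zero]
      apply mul_ne_zero
      · rw [hpe]; exact deriv_lat_ne τ θ hol hzero h1 hτper hder m n
      · intro h0
        obtain ⟨m', n', he⟩ := (hzero _).mp h0
        apply hBv
        refine (hzero _).mpr ⟨m - m', n - n', ?_⟩
        push_cast
        linear_combination hpe - he
    · obtain ⟨m, n, hpe⟩ := (hzero _).mp h
      have hp2 : p = B + v + (m : ℂ) + (n : ℂ) * τ := by linear_combination hpe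
      have hGp : Gf θ u v B p = 0 := by
        rw [hp2]
        exact G_translate τ θ h1 hτper u v B (B + v) (G_B_add_v τ θ hzero hodd u v B) m n
      refine ⟨hGp, ?_⟩
      rw [D_deriv θ hol, h, mul_zero, zero_add]
      apply mul_ne_zero
      · intro h0
        obtain ⟨m', n', he⟩ := (hzero _).mp h0
        apply hBv
        refine (hzero _).mpr ⟨m' - m, n' - n, ?_⟩
        push_cast
        linear_combination he - hpe
      · rw [hpe]
        exact deriv_lat_ne τ θ hol hzero h1 hτper hder m n
  have hw₀ : Df θ (B + v) (B + v + u) ≠ 0 := by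
    simp only [Df]
    rw [show B + v + u - (B + v) = u by ring, show B + v + u = B + u + v by ring]
    exact mul_ne_zero hBuv hθu
  have hTd : Differentiable ℂ (Tf (Gf θ u v B) (Df θ (B + v))) :=
    Tf_differentiable hGd hDd hGD _ hw₀
  -- the set of good points is dense
  have hcount : ({w : ℂ | Df θ (B + v) w = 0} : Set ℂ).Countable := by
    have hsub : {w : ℂ | Df θ (B + v) w = 0} ⊆
        (range fun p : ℤ × ℤ => (p.1 : ℂ) + (p.2 : ℂ) * τ) ∪
          ((fun w => B + v + w) '' (range fun p : ℤ × ℤ => (p.1 : ℂ) + (p.2 : ℂ) * τ)) := by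
      intro w hw
      have hw' : θ w * θ (w - (B + v)) = 0 := hw
      rcases mul_eq_zero.mp hw' with h | h
      · obtain ⟨m, n, he⟩ := (hzero _).mp h
        exact Or.inl ⟨(m, n), he.symm⟩
      · obtain ⟨m, n, he⟩ := (hzero _).mp h
        exact Or.inr ⟨(m : ℂ) + (n : ℂ) * τ, ⟨(m, n), rfl⟩, by linear_combination -he⟩
    exact ((countable_range _).union ((countable_range _).image _)).mono hsub
  have hdense : Dense {w : ℂ | Df θ (B + v) w ≠ 0} := by
    have := hcount.dense_compl ℂ
    convert this using 1
    ext w; simp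
  have hTc : Continuous (Tf (Gf θ u v B) (Df θ (B + v))) := hTd.continuous
  -- periodicity of T
  have hT1 : ∀ w : ℂ, Tf (Gf θ u v B) (Df θ (B + v)) (w + 1)
      = Tf (Gf θ u v B) (Df θ (B + v)) w := by
    have hfe : (fun w : ℂ => Tf (Gf θ u v B) (Df θ (B + v)) (w + 1))
        = Tf (Gf θ u v B) (Df θ (B + v)) := by
      apply Continuous.ext_on hdense (hTc.comp (by continuity)) hTc
      intro w hw
      have hw1 : Df θ (B + v) (w + 1) ≠ 0 := by rw [D_per1 θ h1]; exact hw
      show Tf _ _ (w + 1) = Tf _ _ w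
      rw [Tf_of_ne hw1, Tf_of_ne hw, D_per1 θ h1, G_per1 θ h1]
    exact fun w => congrFun hfe w
  have hTτ : ∀ w : ℂ, Tf (Gf θ u v B) (Df θ (B + v)) (w + τ)
      = Tf (Gf θ u v B) (Df θ (B + v)) w := by
    have hfe : (fun w : ℂ => Tf (Gf θ u v B) (Df θ (B + v)) (w + τ))
        = Tf (Gf θ u v B) (Df θ (B + v)) := by
      apply Continuous.ext_on hdense (hTc.comp (by continuity)) hTc
      intro w hw
      have hwτ : Df θ (B + v) (w + τ) ≠ 0 := by
        rw [D_perτ τ θ hτper]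
        exact mul_ne_zero (Psi_ne τ B v w) hw
      show Tf _ _ (w + τ) = Tf _ _ w
      rw [Tf_of_ne hwτ, Tf_of_ne hw, D_perτ τ θ hτper, G_perτ τ θ hτper,
        mul_div_mul_left _ _ (Psi_ne τ B v w)]
    exact fun w => congrFun hfe w
  -- T is constant, equal to its value at -u, which is 0
  have hDu : Df θ (B + v) (-u) ≠ 0 := by
    simp only [Df]
    rw [show -u - (B + v) = -(B + u + v) by ring, hodd, hodd]
    exact mul_ne_zero (neg_ne_zero.mpr hθu) (neg_ne_zero.mpr hBuv)
  have hTu : Tf (Gf θ u v B) (Df θ (B + v)) (-u) = 0 := by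
    rw [Tf_of_ne hDu, G_neg_u τ θ hzero hodd u v B, zero_div]
  have hconst : ∀ w : ℂ, Tf (Gf θ u v B) (Df θ (B + v)) w = 0 := fun w => by
    rw [elliptic_const hτ.ne' hTd hT1 hTτ w (-u), hTu]
  -- conclude G ≡ 0
  have hfin : (Gf θ u v B) = fun _ => (0 : ℂ) := by
    apply Continuous.ext_on hdense hGd.continuous continuous_const
    intro w hw
    have : Gf θ u v B w = Tf (Gf θ u v B) (Df θ (B + v)) w * Df θ (B + v) w := by
      rw [Tf_of_ne hw, div_mul_cancel₀ _ hw]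
    rw [this, hconst w, zero_mul]
  exact congrFun hfin A

lemma theta_fay_all (τ : ℂ) (hτ : 0 < τ.im) (θ : ℂ → ℂ) (hol : Differentiable ℂ θ)
    (hzero : ∀ z : ℂ, θ z = 0 ↔ ∃ m n : ℤ, z = (m : ℂ) + (n : ℂ) * τ)
    (h1 : ∀ z : ℂ, θ (z + 1) = -θ z)
    (hodd : ∀ z : ℂ, θ (-z) = -θ z)
    (hτper : ∀ z : ℂ, θ (z + τ) = phi τ z * θ z)
    (hder : deriv θ 0 = 1)
    (u v : ℂ) (hθu : θ u ≠ 0) (A B : ℂ) : Gf θ u v B A = 0 := by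
  have hc := hol.continuous
  have hGcont : Continuous (fun B : ℂ => Gf θ u v B A) := by
    unfold Gf
    apply Continuous.sub
    · apply Continuous.add
      · exact (((continuous_const.mul (hc.comp (by continuity))).mul hc).mul continuous_const)
      · exact ((continuous_const.mul (hc.comp (by continuity))).mul
          (hc.comp (by continuity))).mul continuous_const
    · exact (((hc.comp (by continuity)).mul (hc.comp (by continuity))).mul
        continuous_const).mul continuous_const
  have hdense : Dense {B : ℂ | θ (B + v) ≠ 0 ∧ θ (B + u + v) ≠ 0} := by
    have hcount : ({B : ℂ | θ (B + v) = 0 ∨ θ (B + u + v) = 0} : Set ℂ).Countable := by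
      have hsub : {B : ℂ | θ (B + v) = 0 ∨ θ (B + u + v) = 0} ⊆
          ((fun w => w - v) '' (range fun p : ℤ × ℤ => (p.1 : ℂ) + (p.2 : ℂ) * τ)) ∪
            ((fun w => w - u - v) '' (range fun p : ℤ × ℤ => (p.1 : ℂ) + (p.2 : ℂ) * τ)) := by
        intro B hB
        rcases hB with h | h
        · obtain ⟨m, n, he⟩ := (hzero _).mp h
          exact Or.inl ⟨(m : ℂ) + (n : ℂ) * τ, ⟨(m, n), rfl⟩, by linear_combination -he⟩
        · obtain ⟨m, n, he⟩ := (hzero _).mp h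
          exact Or.inr ⟨(m : ℂ) + (n : ℂ) * τ, ⟨(m, n), rfl⟩, by linear_combination -he⟩
      exact (((countable_range _).image _).union ((countable_range _).image _)).mono hsub
    have := hcount.dense_compl ℂ
    convert this using 1
    ext B
    simp only [mem_setOf_eq, mem_compl_iff, not_or]
  have hfe : (fun B : ℂ => Gf θ u v B A) = fun _ => (0 : ℂ) := by
    apply Continuous.ext_on hdense hGcont continuous_const
    intro B hB
    exact core_generic τ hτ θ hol hzero h1 hodd hτper hder u v B hθu hB.1 hB.2 A
  exact congrFun hfe B


theorem twisted_theta_kernel_fay_identity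
    (M N : ℕ) (hM : 0 < M) (hN : 0 < N)
    (τ : ℂ) (hτ : 0 < τ.im)
    (θ : ℂ → ℂ) (hol : Differentiable ℂ θ)
    (hzero : ∀ z : ℂ, θ z = 0 ↔ ∃ m n : ℤ, z = (m : ℂ) + (n : ℂ) * τ)
    (h1 : ∀ z : ℂ, θ (z + 1) = -θ z)
    (hodd : ∀ z : ℂ, θ (-z) = -θ z)
    (hτper : ∀ z : ℂ, θ (z + τ) =
      -Complex.exp (-(↑Real.pi * I * τ)) * Complex.exp (-(2 * ↑Real.pi * I * z)) * θ z)
    (hder : deriv θ 0 = 1)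
    -- `kα p q` is `k_α` computed with respect to the lift `α̃ = p/M + (q/N)τ`
    (kα : ℤ → ℤ → ℂ → ℂ → ℂ)
    (hkα : ∀ (p q : ℤ) (x z : ℂ), kα p q x z =
      Complex.exp (-(2 * ↑Real.pi * I * ((q : ℂ) / (N : ℂ)) * x)) *
          θ (z - ((p : ℂ) / (M : ℂ) + ((q : ℂ) / (N : ℂ)) * τ) + x) /
        (θ (z - ((p : ℂ) / (M : ℂ) + ((q : ℂ) / (N : ℂ)) * τ)) * θ x) - 1 / x)
    -- lifts of `α` and `β`
    (pa qa pb qb : ℤ)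
    (u v z z' : ℂ)
    (hu : u ≠ 0) (hv : v ≠ 0) (huv : u + v ≠ 0)
    (hθu : θ u ≠ 0) (hθv : θ v ≠ 0) (hθuv : θ (u + v) ≠ 0)
    (hza : θ (z - ((pa : ℂ) / (M : ℂ) + ((qa : ℂ) / (N : ℂ)) * τ)) ≠ 0)
    (hzb : θ (z' - ((pb : ℂ) / (M : ℂ) + ((qb : ℂ) / (N : ℂ)) * τ)) ≠ 0)
    (hzba : θ (z' - z - (((pb - pa : ℤ) : ℂ) / (M : ℂ) + (((qb - qa : ℤ) : ℂ) / (N : ℂ)) * τ)) ≠ 0) :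
    (kα pa qa (-v) z - 1 / v) * (kα pb qb (u + v) z' + 1 / (u + v)) -
      (kα pa qa u z + 1 / u) * (kα (pb - pa) (qb - qa) (u + v) (z' - z) + 1 / (u + v)) +
      (kα pb qb u z' + 1 / u) * (kα (pb - pa) (qb - qa) v (z' - z) + 1 / v) = 0 := by
  have hτper' : ∀ w : ℂ, θ (w + τ) = phi τ w * θ w := fun w => by rw [hτper w]; rfl
  have hN0 : (N : ℂ) ≠ 0 := Nat.cast_ne_zero.mpr hN.ne'
  set Aa := z - ((pa : ℂ) / (M : ℂ) + ((qa : ℂ) / (N : ℂ)) * τ) with hAa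
  set Bb := z' - ((pb : ℂ) / (M : ℂ) + ((qb : ℂ) / (N : ℂ)) * τ) with hBb
  have hBA : z' - z - (((pb - pa : ℤ) : ℂ) / (M : ℂ) + (((qb - qa : ℤ) : ℂ) / (N : ℂ)) * τ)
      = Bb - Aa := by
    rw [hAa, hBb]; push_cast; ring
  have hBAne : θ (Bb - Aa) ≠ 0 := by rw [← hBA]; exact hzba
  -- the core identity
  have key : Gf θ u v Bb Aa = 0 :=
    theta_fay_all τ hτ θ hol hzero h1 hodd hτper' hder u v hθu Aa Bb
  simp only [Gf] at key
  -- bracket computations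
  have b1 : kα pa qa (-v) z - 1 / v
      = Complex.exp (2 * ↑Real.pi * I * ((qa : ℂ) / (N : ℂ)) * v) *
          (θ (Aa - v) / (-(θ Aa * θ v))) := by
    rw [hkα, ← hAa, show Aa + -v = Aa - v by ring,
      show -(2 * ↑Real.pi * I * ((qa : ℂ) / (N : ℂ)) * (-v))
        = 2 * ↑Real.pi * I * ((qa : ℂ) / (N : ℂ)) * v by ring,
      hodd v]
    rw [div_neg, sub_neg_eq_add, add_sub_cancel_right]
    rw [show θ Aa * -θ v = -(θ Aa * θ v) by ring, mul_div_assoc]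
  have b2 : kα pb qb (u + v) z' + 1 / (u + v)
      = Complex.exp (-(2 * ↑Real.pi * I * ((qb : ℂ) / (N : ℂ)) * (u + v))) *
          (θ (Bb + u + v) / (θ Bb * θ (u + v))) := by
    rw [hkα, ← hBb, show Bb + (u + v) = Bb + u + v by ring, sub_add_cancel, mul_div_assoc]
  have b3 : kα pa qa u z + 1 / u
      = Complex.exp (-(2 * ↑Real.pi * I * ((qa : ℂ) / (N : ℂ)) * u)) *
          (θ (Aa + u) / (θ Aa * θ u)) := by
    rw [hkα, ← hAa, sub_add_cancel, mul_div_assoc]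
  have b4 : kα (pb - pa) (qb - qa) (u + v) (z' - z) + 1 / (u + v)
      = Complex.exp (-(2 * ↑Real.pi * I * (((qb - qa : ℤ) : ℂ) / (N : ℂ)) * (u + v))) *
          (θ (Bb - Aa + u + v) / (θ (Bb - Aa) * θ (u + v))) := by
    rw [hkα, hBA, show Bb - Aa + (u + v) = Bb - Aa + u + v by ring, sub_add_cancel, mul_div_assoc]
  have b5 : kα pb qb u z' + 1 / u
      = Complex.exp (-(2 * ↑Real.pi * I * ((qb : ℂ) / (N : ℂ)) * u)) *
          (θ (Bb + u) / (θ Bb * θ u)) := by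
    rw [hkα, ← hBb, sub_add_cancel, mul_div_assoc]
  have b6 : kα (pb - pa) (qb - qa) v (z' - z) + 1 / v
      = Complex.exp (-(2 * ↑Real.pi * I * (((qb - qa : ℤ) : ℂ) / (N : ℂ)) * v)) *
          (θ (Bb - Aa + v) / (θ (Bb - Aa) * θ v)) := by
    rw [hkα, hBA, sub_add_cancel, mul_div_assoc]
  rw [b1, b2, b3, b4, b5, b6]
  -- combine the exponentials
  have hE1 : Complex.exp (2 * ↑Real.pi * I * ((qa : ℂ) / (N : ℂ)) * v) *
      Complex.exp (-(2 * ↑Real.pi * I * ((qb : ℂ) / (N : ℂ)) * (u + v)))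
      = Complex.exp (2 * ↑Real.pi * I * (((qa : ℂ) * v - (qb : ℂ) * (u + v)) / (N : ℂ))) := by
    rw [← Complex.exp_add]
    congr 1
    field_simp
    ring
  have hE2 : Complex.exp (-(2 * ↑Real.pi * I * ((qa : ℂ) / (N : ℂ)) * u)) *
      Complex.exp (-(2 * ↑Real.pi * I * (((qb - qa : ℤ) : ℂ) / (N : ℂ)) * (u + v)))
      = Complex.exp (2 * ↑Real.pi * I * (((qa : ℂ) * v - (qb : ℂ) * (u + v)) / (N : ℂ))) := by
    rw [← Complex.exp_add]
    congr 1
    push_cast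
    field_simp
    ring
  have hE3 : Complex.exp (-(2 * ↑Real.pi * I * ((qb : ℂ) / (N : ℂ)) * u)) *
      Complex.exp (-(2 * ↑Real.pi * I * (((qb - qa : ℤ) : ℂ) / (N : ℂ)) * v))
      = Complex.exp (2 * ↑Real.pi * I * (((qa : ℂ) * v - (qb : ℂ) * (u + v)) / (N : ℂ))) := by
    rw [← Complex.exp_add]
    congr 1
    push_cast
    field_simp
    ring
  have hR : (θ (Aa - v) / (-(θ Aa * θ v))) * (θ (Bb + u + v) / (θ Bb * θ (u + v)))
      - (θ (Aa + u) / (θ Aa * θ u)) * (θ (Bb - Aa + u + v) / (θ (Bb - Aa) * θ (u + v)))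
      + (θ (Bb + u) / (θ Bb * θ u)) * (θ (Bb - Aa + v) / (θ (Bb - Aa) * θ v)) = 0 := by
    rw [div_neg]
    field_simp [hza, hzb, hBAne, hθu, hθv, hθuv]
    linear_combination (-1 : ℂ) * key
  linear_combination
    ((θ (Aa - v) / (-(θ Aa * θ v))) * (θ (Bb + u + v) / (θ Bb * θ (u + v)))) * hE1
    - ((θ (Aa + u) / (θ Aa * θ u)) * (θ (Bb - Aa + u + v) / (θ (Bb - Aa) * θ (u + v)))) * hE2
    + ((θ (Bb + u) / (θ Bb * θ u)) * (θ (Bb - Aa + v) / (θ (Bb - Aa) * θ v))) * hE3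
    + Complex.exp (2 * ↑Real.pi * I * (((qa : ℂ) * v - (qb : ℂ) * (u + v)) / (N : ℂ))) * hR
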